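/- Let a, b, c, γ, σ, ρ, θ be real numbers with cos(c/2) ≠ 0 and cos(c/2) + cos(ρ) ≠ 0, satisfying: (i) cos(a) = cos(ρ)·cos(c/2) + sin(ρ)·sin(c/2)·cos(θ); (ii) cos(b) = cos(ρ)·cos(c/2) − sin(ρ)·sin(c/2)·cos(θ); (iii) sin(a)·sin(b)·sin(γ) = sin(ρ)·sin(θ)·sin(c); and (iv) tan(σ/2)·(1 + cos(a) + cos(b) + cos(c)) = sin(a)·sin(b)·sin(γ). Then tan(σ/2) = sin(c/2)·sin(ρ)·sin(θ) / (cos(c/2) + cos(ρ)). -/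
import Mathlib

open Real

/-- The median formula for the area of a spherical triangle: if ρ is the median
length from C to the midpoint P of side c and θ is the angle between PB and PC,
then tan(σ/2) = sin(c/2)·sin(ρ)·sin(θ)/(cos(c/2) + cos(ρ)). -/
theorem median_area_formula (a b c γ σ ρ θ : ℝ)
    (hc : Real.cos (c / 2) ≠ 0) (hden : Real.cos (c / 2) + Real.cos ρ ≠ 0)
    (h1 : Real.cos a = Real.cos ρ * Real.cos (c / 2) +
      Real.sin ρ * Real.sin (c / 2) * Real.cos θ)
    (h2 : Real.cos b = Real.cos ρ * Real.cos (c / 2) -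
      Real.sin ρ * Real.sin (c / 2) * Real.cos θ)
    (h3 : Real.sin a * Real.sin b * Real.sin γ = Real.sin ρ * Real.sin θ * Real.sin c)
    (h4 : Real.tan (σ / 2) * (1 + Real.cos a + Real.cos b + Real.cos c) =
      Real.sin a * Real.sin b * Real.sin γ) :
    Real.tan (σ / 2) =
      Real.sin (c / 2) * Real.sin ρ * Real.sin θ / (Real.cos (c / 2) + Real.cos ρ) := by
  have hcos : Real.cos c = 2 * Real.cos (c / 2) ^ 2 - 1 := by
    rw [show c = 2 * (c / 2) by ring, Real.cos_two_mul]; ring_nf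
  have hsin : Real.sin c = 2 * Real.sin (c / 2) * Real.cos (c / 2) := by
    rw [show c = 2 * (c / 2) by ring, Real.sin_two_mul]; ring_nf
  have key : Real.tan (σ / 2) * (Real.cos (c / 2) + Real.cos ρ) * (2 * Real.cos (c / 2)) =
      Real.sin (c / 2) * Real.sin ρ * Real.sin θ * (2 * Real.cos (c / 2)) := by
    have := h4
    rw [h1, h2, hcos] at this
    rw [hsin] at h3
    linear_combination this + h3
  have h2c : (2 : ℝ) * Real.cos (c / 2) ≠ 0 := by
    simpa using hc
  have := mul_right_cancel₀ h2c key
  field_simp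
  linarith [this]
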